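/- Let a > 0 and assume that the solution f(·;a) satisfies f(r;a) > 0 for all r > 0. Then f(r;a) → 0 and f'(r;a) → 0 as r → ∞. -/

import Mathlib

open Real Set Filter MeasureTheory

/-- `f` is a solution of the profile equation with parameter `a`:
`f` is C¹ on `[0,∞)` with derivative `f'`, the map `r ↦ |f'(r)|^{p-2} f'(r)` is C¹ on `[0,∞)`
with derivative `F'`, the ODE
`(|f'|^{p-2}f')'(r) + ((N-1)/r)(|f'|^{p-2}f')(r) + f(r) - |f'(r)|^{p-1} = 0` holds for `r > 0`,
and `f 0 = a`, `f' 0 = 0`. -/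
def IsProfileSol (N : ℕ) (p a : ℝ) (f f' F' : ℝ → ℝ) : Prop :=
  (∀ r ∈ Ici (0:ℝ), HasDerivWithinAt f (f' r) (Ici 0) r) ∧
  ContinuousOn f' (Ici 0) ∧
  (∀ r ∈ Ici (0:ℝ), HasDerivWithinAt (fun s => |f' s| ^ (p - 2) * f' s) (F' r) (Ici 0) r) ∧
  ContinuousOn F' (Ici 0) ∧
  (∀ r, 0 < r →
    F' r + (((N : ℝ) - 1) / r) * (|f' r| ^ (p - 2) * f' r) + f r - |f' r| ^ (p - 1) = 0) ∧
  f 0 = a ∧ f' 0 = 0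

/-- `g(r;a) = -|f'(r;a)|^{p-2} f'(r;a)`. -/
noncomputable def gFun (p : ℝ) (f' : ℝ → ℝ) (r : ℝ) : ℝ := -(|f' r| ^ (p - 2) * f' r)

/-- `ρ(r) = r^{N-1} e^r`. -/
noncomputable def rho (N : ℕ) (r : ℝ) : ℝ := r ^ (N - 1) * Real.exp r

/-- the derivative of `ρ`. -/
noncomputable def rho' (N : ℕ) (r : ℝ) : ℝ :=
  (((N : ℝ) - 1) * r ^ (N - 2) + r ^ (N - 1)) * Real.exp r

/-- `w(r;a) = ρ(r) g(r;a)`. -/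
noncomputable def wFun (N : ℕ) (p : ℝ) (f' : ℝ → ℝ) (r : ℝ) : ℝ := rho N r * gFun p f' r

/-- the derivative `w'(r;a) = ρ'(r) g(r;a) + ρ(r) g'(r;a)`, where `g' = -F'`. -/
noncomputable def wDeriv (N : ℕ) (p : ℝ) (f' F' : ℝ → ℝ) (r : ℝ) : ℝ :=
  rho' N r * gFun p f' r - rho N r * F' r

/-! ### Auxiliary lemmas -/

lemma hasDerivAt_rho {N : ℕ} (hN : 2 ≤ N) (r : ℝ) : HasDerivAt (rho N) (rho' N r) r := by
  have hcast : ((N - 1 : ℕ) : ℝ) = (N : ℝ) - 1 := by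
    rw [Nat.cast_sub (by omega)]; norm_num
  have hsub : N - 1 - 1 = N - 2 := by omega
  have h : HasDerivAt (fun s : ℝ => s ^ (N - 1) * Real.exp s) (rho' N r) r := by
    have h := ((hasDerivAt_pow (N - 1) r).mul (Real.hasDerivAt_exp r))
    refine h.congr_deriv ?_
    rw [rho', hsub, hcast]; ring
  exact h

lemma rho_pos {N : ℕ} {r : ℝ} (hr : 0 < r) : 0 < rho N r :=
  mul_pos (pow_pos hr _) (Real.exp_pos r)

lemma rho'_eq {N : ℕ} (hN : 2 ≤ N) {r : ℝ} (hr : 0 < r) :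
    rho' N r = (1 + ((N : ℝ) - 1) / r) * rho N r := by
  have h2 : r ^ (N - 2) = r ^ (N - 1) / r := by
    rw [eq_div_iff hr.ne', ← pow_succ]
    congr 1; omega
  rw [rho', rho, h2]
  field_simp
  ring

/-- `| |x|^(p-2) * x | = |x|^(p-1)` for `p ≠ 1, 2`. -/
lemma abs_G_eq {p : ℝ} (hp1 : 1 < p) (hp2 : p < 2) (x : ℝ) :
    |(|x| ^ (p - 2) * x)| = |x| ^ (p - 1) := by
  rcases eq_or_ne x 0 with rfl | hx
  · simp [Real.zero_rpow (by linarith : p - 1 ≠ 0)]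
  · rw [abs_mul, abs_of_nonneg (Real.rpow_nonneg (abs_nonneg x) _)]
    rw [show p - 1 = (p - 2) + 1 by ring, Real.rpow_add_one (abs_ne_zero.2 hx)]

section Sol

variable {N : ℕ} {p a : ℝ} {f f' F' : ℝ → ℝ}

/-- derivative of `w`. -/
lemma hasDerivWithinAt_w (hN : 2 ≤ N) (hf : IsProfileSol N p a f f' F') :
    ∀ r ∈ Ici (0:ℝ), HasDerivWithinAt (wFun N p f') (wDeriv N p f' F' r) (Ici 0) r := by
  intro r hr
  have h := ((hasDerivAt_rho hN r).hasDerivWithinAt).mul ((hf.2.2.1 r hr).neg)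
  have e : wDeriv N p f' F' r =
      rho' N r * (fun s => -(|f' s| ^ (p - 2) * f' s)) r + rho N r * (-(F' r)) := by
    rw [wDeriv]; show _ = rho' N r * gFun p f' r + rho N r * (-(F' r)); ring
  rw [e]
  exact h

lemma wDeriv_eq (hN : 2 ≤ N) (hp1 : 1 < p) (hp2 : p < 2)
    (hf : IsProfileSol N p a f f' F') {r : ℝ} (hr : 0 < r) :
    wDeriv N p f' F' r = rho N r * (f r + gFun p f' r - |gFun p f' r|) := by
  have hode := hf.2.2.2.2.1 r hr
  have hg : gFun p f' r = -(|f' r| ^ (p - 2) * f' r) := rfl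
  have habs : |f' r| ^ (p - 1) = |(|f' r| ^ (p - 2) * f' r)| := (abs_G_eq hp1 hp2 _).symm
  have hF' : F' r = |f' r| ^ (p - 1) - f r
      - (((N : ℝ) - 1) / r) * (|f' r| ^ (p - 2) * f' r) := by linarith
  rw [wDeriv, rho'_eq hN hr, hg, abs_neg, ← habs, hF']
  ring

lemma w_zero (hN : 2 ≤ N) : wFun N p f' 0 = 0 := by
  rw [wFun, rho]; simp [zero_pow (by omega : N - 1 ≠ 0)]

lemma w_nonneg (hN : 2 ≤ N) (hp1 : 1 < p) (hp2 : p < 2)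
    (hf : IsProfileSol N p a f f' F') (hpos : ∀ r, 0 < r → 0 < f r) :
    ∀ r, 0 ≤ r → 0 ≤ wFun N p f' r := by
  intro r₁ hr₁0
  by_contra hneg
  push_neg at hneg
  have hw := hasDerivWithinAt_w hN hf
  have hwc : ContinuousOn (wFun N p f') (Ici 0) := fun x hx => (hw x hx).continuousWithinAt
  have hr₁ : 0 < r₁ := by
    rcases hr₁0.lt_or_eq with h | h
    · exact h
    · exfalso
      have h0 : wFun N p f' r₁ = 0 := by rw [← h]; exact w_zero hN
      linarith
  set v : ℝ → ℝ := fun r => Real.exp (-2 * r) * wFun N p f' r with hv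
  have hvr₁ : v r₁ < 0 := mul_neg_of_pos_of_neg (Real.exp_pos _) hneg
  have hvc : ContinuousOn v (Icc 0 r₁) :=
    ((Real.continuous_exp.comp (continuous_const.mul continuous_id)).continuousOn).mul
      (hwc.mono Icc_subset_Ici_self)
  set A : Set ℝ := Icc 0 r₁ ∩ v ⁻¹' (Ici 0) with hA
  have hAclosed : IsClosed A := hvc.preimage_isClosed_of_isClosed isClosed_Icc isClosed_Ici
  have h0A : (0:ℝ) ∈ A := by
    refine ⟨⟨le_rfl, hr₁.le⟩, ?_⟩
    show (0:ℝ) ≤ v 0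
    have h0 : wFun N p f' 0 = 0 := w_zero hN
    simp [hv, h0]
  have hAbdd : BddAbove A := ⟨r₁, fun x hx => hx.1.2⟩
  set s := sSup A with hs
  have hsA : s ∈ A := hAclosed.csSup_mem ⟨0, h0A⟩ hAbdd
  have hs0 : 0 ≤ s := hsA.1.1
  have hvs : (0:ℝ) ≤ v s := hsA.2
  have hsr₁ : s < r₁ := by
    rcases hsA.1.2.lt_or_eq with h | h
    · exact h
    · exfalso; rw [h] at hvs; linarith
  have hvlt : ∀ t, s < t → t ≤ r₁ → v t < 0 := by
    intro t hst htr
    by_contra hge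
    push_neg at hge
    have htA : t ∈ A := ⟨⟨le_trans hs0 hst.le, htr⟩, hge⟩
    exact absurd (le_csSup hAbdd htA) (not_le.2 hst)
  have hmono : MonotoneOn v (Icc s r₁) := by
    apply monotoneOn_of_hasDerivWithinAt_nonneg (convex_Icc s r₁)
      (hvc.mono (Icc_subset_Icc hs0 le_rfl))
      (f' := fun x => Real.exp (-2*x) * (wDeriv N p f' F' x - 2 * wFun N p f' x))
    · intro x hx
      rw [interior_Icc] at hx
      have hx0 : 0 < x := lt_of_le_of_lt hs0 hx.1
      have hwx : HasDerivAt (wFun N p f') (wDeriv N p f' F' x) x :=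
        (hw x hx0.le).hasDerivAt (Ici_mem_nhds hx0)
      have hex : HasDerivAt (fun r : ℝ => Real.exp (-2 * r)) (Real.exp (-2*x) * (-2)) x := by
        simpa using ((hasDerivAt_id x).const_mul (-2)).exp
      have hprod := hex.mul hwx
      have e : Real.exp (-2*x) * (wDeriv N p f' F' x - 2 * wFun N p f' x)
          = Real.exp (-2*x) * (-2) * wFun N p f' x + Real.exp (-2*x) * wDeriv N p f' F' x := by
        ring
      rw [e]
      exact hprod.hasDerivWithinAt
    · intro x hx
      rw [interior_Icc] at hx
      have hx0 : 0 < x := lt_of_le_of_lt hs0 hx.1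
      have hvx : v x < 0 := hvlt x hx.1 hx.2.le
      have hwx : wFun N p f' x < 0 := by
        by_contra hge; push_neg at hge
        exact absurd (mul_nonneg (Real.exp_pos _).le hge) (not_le.2 hvx)
      have hrx := rho_pos (N := N) hx0
      have hgx : gFun p f' x < 0 := by
        by_contra hgge; push_neg at hgge
        have : 0 ≤ wFun N p f' x := by rw [wFun]; exact mul_nonneg hrx.le hgge
        linarith
      have habs : |gFun p f' x| = -gFun p f' x := abs_of_neg hgx
      have e2 : wDeriv N p f' F' x - 2 * wFun N p f' x = rho N x * f x := by
        rw [wDeriv_eq hN hp1 hp2 hf hx0, habs, wFun]; ring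
      have : 0 ≤ wDeriv N p f' F' x - 2 * wFun N p f' x := by
        rw [e2]; exact mul_nonneg hrx.le (hpos x hx0).le
      exact mul_nonneg (Real.exp_pos _).le this
  have hcomp : v s ≤ v r₁ := hmono ⟨le_rfl, hsr₁.le⟩ ⟨hsr₁.le, le_rfl⟩ hsr₁.le
  linarith

lemma gFun_pos (hN : 2 ≤ N) (hp1 : 1 < p) (hp2 : p < 2)
    (hf : IsProfileSol N p a f f' F') (hpos : ∀ r, 0 < r → 0 < f r) :
    ∀ r, 0 < r → 0 < gFun p f' r := by
  have hw := hasDerivWithinAt_w hN hf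
  have hwnn := w_nonneg hN hp1 hp2 hf hpos
  have hstrict : StrictMonoOn (wFun N p f') (Ici 0) := by
    apply strictMonoOn_of_hasDerivWithinAt_pos (convex_Ici 0)
      (fun x hx => (hw x hx).continuousWithinAt) (f' := wDeriv N p f' F')
    · intro x hx
      rw [interior_Ici] at hx ⊢
      exact (hw x (Ioi_subset_Ici_self hx)).mono Ioi_subset_Ici_self
    · intro x hx
      rw [interior_Ici] at hx
      have hg0 : 0 ≤ gFun p f' x := by
        have h1 := hwnn x hx.le
        by_contra h; push_neg at h
        have : wFun N p f' x < 0 := by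
          rw [wFun]; exact mul_neg_of_pos_of_neg (rho_pos hx) h
        linarith
      have habs : |gFun p f' x| = gFun p f' x := abs_of_nonneg hg0
      rw [wDeriv_eq hN hp1 hp2 hf hx, habs]
      have h2 := hpos x hx
      have h3 := rho_pos (N := N) hx
      have : f x + gFun p f' x - gFun p f' x = f x := by ring
      rw [this]
      exact mul_pos h3 h2
  intro r hr
  have h := hstrict self_mem_Ici (show r ∈ Ici (0:ℝ) from hr.le) hr
  rw [w_zero hN] at h
  by_contra hle; push_neg at hle
  have : wFun N p f' r ≤ 0 := by
    rw [wFun]; exact mul_nonpos_of_nonneg_of_nonpos (rho_pos hr).le hle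
  linarith

lemma f'_neg (hN : 2 ≤ N) (hp1 : 1 < p) (hp2 : p < 2)
    (hf : IsProfileSol N p a f f' F') (hpos : ∀ r, 0 < r → 0 < f r) :
    ∀ r, 0 < r → f' r < 0 := by
  intro r hr
  have hg := gFun_pos hN hp1 hp2 hf hpos r hr
  by_contra h; push_neg at h
  have : 0 ≤ |f' r| ^ (p - 2) * f' r := mul_nonneg (Real.rpow_nonneg (abs_nonneg _) _) h
  rw [gFun] at hg; linarith

lemma gFun_eq {r : ℝ} (hf'neg : f' r < 0) : gFun p f' r = (-f' r) ^ (p - 1) := by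
  rw [gFun, abs_of_neg hf'neg,
    show p - 1 = (p - 2) + 1 by ring,
    Real.rpow_add_one (ne_of_gt (neg_pos.2 hf'neg))]
  ring

/-- Derivative of the energy `E = f²/2 + ((p-1)/p) g^{p/(p-1)}`. -/
lemma hasDerivAt_E (hN : 2 ≤ N) (hp1 : 1 < p) (hp2 : p < 2)
    (hf : IsProfileSol N p a f f' F') (hpos : ∀ r, 0 < r → 0 < f r)
    {x : ℝ} (hx : 0 < x) :
    HasDerivAt (fun r => (f r) ^ 2 / 2 + ((p - 1) / p) * (gFun p f' r) ^ (p / (p - 1)))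
      (-(1 + ((N : ℝ) - 1) / x) * (-f' x) ^ p) x := by
  have hp0 : p ≠ 0 := by positivity
  have hpm1 : p - 1 ≠ 0 := ne_of_gt (by linarith)
  have hfx : f' x < 0 := f'_neg hN hp1 hp2 hf hpos x hx
  have hfx' : (0:ℝ) < -f' x := neg_pos.2 hfx
  have hgx : 0 < gFun p f' x := gFun_pos hN hp1 hp2 hf hpos x hx
  have hgeq : gFun p f' x = (-f' x) ^ (p - 1) := gFun_eq hfx
  have hf'x : HasDerivAt f (f' x) x := (hf.1 x hx.le).hasDerivAt (Ici_mem_nhds hx)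
  have hGx : HasDerivAt (fun s => |f' s| ^ (p - 2) * f' s) (F' x) x :=
    (hf.2.2.1 x hx.le).hasDerivAt (Ici_mem_nhds hx)
  have hgd : HasDerivAt (gFun p f') (-(F' x)) x := hGx.neg
  have hrpow := Real.hasDerivAt_rpow_const (x := gFun p f' x) (p := p / (p - 1))
    (Or.inl (ne_of_gt hgx))
  have hcomp : HasDerivAt (fun s => (gFun p f' s) ^ (p / (p - 1)))
      ((p / (p - 1)) * (gFun p f' x) ^ (p / (p - 1) - 1) * (-(F' x))) x := hrpow.comp x hgd
  have hsum := ((hf'x.pow 2).div_const 2).add (hcomp.const_mul ((p - 1) / p))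
  -- identity A : g^(q-1) = -f'
  have hA : (gFun p f' x) ^ (p / (p - 1) - 1) = -f' x := by
    rw [hgeq, ← Real.rpow_mul hfx'.le,
      show (p - 1) * (p / (p - 1) - 1) = 1 by field_simp; ring, Real.rpow_one]
  -- identity : (-f')^p = (-f')^(p-1) * (-f')
  have hfp' : (-f' x) ^ p = (-f' x) ^ (p - 1) * (-f' x) := by
    rw [← Real.rpow_add_one (ne_of_gt hfx') (p - 1)]; norm_num
  -- ODE rearranged
  have hode := hf.2.2.2.2.1 x hx
  have habs : |f' x| ^ (p - 1) = gFun p f' x := by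
    rw [← abs_of_pos hgx, gFun, abs_neg, abs_G_eq hp1 hp2]
  have hGg : |f' x| ^ (p - 2) * f' x = -gFun p f' x := by rw [gFun]; ring
  rw [hGg, habs] at hode
  have hF' : F' x = (1 + ((N : ℝ) - 1) / x) * gFun p f' x - f x := by
    linear_combination hode
  refine hsum.congr_deriv ?_
  rw [hA, hF', hgeq, hfp']
  field_simp
  ring

end Sol

/-- A nonnegative function that is antitone on `[R,∞)` tends to a nonnegative limit. -/
lemma tendsto_of_antitoneOn {f : ℝ → ℝ} {R : ℝ} (hm : AntitoneOn f (Ici R))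
    (hb : ∀ r ∈ Ici R, 0 ≤ f r) : ∃ L, 0 ≤ L ∧ Filter.Tendsto f Filter.atTop (nhds L) := by
  set g : ℝ → ℝ := fun r => f (max r R) with hg
  have hga : Antitone g := by
    intro x y hxy
    exact hm (le_max_right x R) (le_max_right y R) (max_le_max hxy le_rfl)
  have hgb : BddBelow (range g) := by
    refine ⟨0, ?_⟩
    rintro _ ⟨x, rfl⟩
    exact hb _ (le_max_right x R)
  refine ⟨⨅ i, g i, ?_, ?_⟩
  · exact le_ciInf fun i => hb _ (le_max_right i R)
  · refine (tendsto_atTop_ciInf hga hgb).congr' ?_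
    filter_upwards [eventually_ge_atTop R] with x hx
    rw [hg]; simp [max_eq_left hx]

theorem stmt5 (N : ℕ) (hN : 2 ≤ N) (p : ℝ)
    (hp1 : 2 * (N : ℝ) / ((N : ℝ) + 1) < p) (hp2 : p < 2)
    (a : ℝ) (ha : 0 < a)
    (f f' F' : ℝ → ℝ) (hf : IsProfileSol N p a f f' F')
    (hpos : ∀ r, 0 < r → 0 < f r) :
    Filter.Tendsto f Filter.atTop (nhds 0) ∧ Filter.Tendsto f' Filter.atTop (nhds 0) := by
  have hN1 : (1:ℝ) ≤ (N:ℝ) := by exact_mod_cast (by omega : 1 ≤ N)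
  have hp1' : 1 < p := by
    have h : (1:ℝ) ≤ 2 * (N:ℝ) / ((N:ℝ) + 1) := by
      rw [le_div_iff₀ (by linarith)]; linarith
    linarith
  have hp0 : p ≠ 0 := ne_of_gt (by linarith)
  have hpm1 : (0:ℝ) < p - 1 := by linarith
  have hf'neg := f'_neg hN hp1' hp2 hf hpos
  have hgpos := gFun_pos hN hp1' hp2 hf hpos
  -- f is antitone on [0,∞), nonnegative, hence has a limit L ≥ 0
  have hfanti : AntitoneOn f (Ici 0) := by
    apply antitoneOn_of_hasDerivWithinAt_nonpos (convex_Ici 0)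
      (fun x hx => (hf.1 x hx).continuousWithinAt) (f' := f')
    · intro x hx; rw [interior_Ici] at hx ⊢
      exact (hf.1 x (Ioi_subset_Ici_self hx)).mono Ioi_subset_Ici_self
    · intro x hx; rw [interior_Ici] at hx
      exact (hf'neg x hx).le
  have hfnn : ∀ r ∈ Ici (0:ℝ), 0 ≤ f r := by
    intro r hr
    rcases eq_or_lt_of_le (show (0:ℝ) ≤ r from hr) with h | h
    · rw [← h, hf.2.2.2.2.2.1]; exact ha.le
    · exact (hpos r h).le
  obtain ⟨L, hL0, hfL⟩ := tendsto_of_antitoneOn hfanti hfnn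
  -- the energy E
  set E : ℝ → ℝ := fun r => (f r) ^ 2 / 2 + ((p - 1) / p) * (gFun p f' r) ^ (p / (p - 1))
    with hEdef
  have hEd : ∀ x : ℝ, 0 < x → HasDerivAt E (-(1 + ((N : ℝ) - 1) / x) * (-f' x) ^ p) x :=
    fun x hx => hasDerivAt_E hN hp1' hp2 hf hpos hx
  have hcoef : ∀ x : ℝ, 1 ≤ x → (1:ℝ) ≤ 1 + ((N:ℝ)-1)/x := by
    intro x hx
    have : 0 ≤ ((N:ℝ)-1)/x := div_nonneg (by linarith) (by linarith)
    linarith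
  have hphinn : ∀ x : ℝ, 0 < x → 0 ≤ (-f' x) ^ p :=
    fun x hx => Real.rpow_nonneg (by linarith [hf'neg x hx]) p
  have hEanti : AntitoneOn E (Ici 1) := by
    apply antitoneOn_of_hasDerivWithinAt_nonpos (convex_Ici 1)
      (fun x hx => (hEd x (lt_of_lt_of_le one_pos hx)).continuousAt.continuousWithinAt)
      (f' := fun x => -(1 + ((N : ℝ) - 1) / x) * (-f' x) ^ p)
    · intro x hx; rw [interior_Ici] at hx
      exact (hEd x (lt_trans one_pos hx)).hasDerivWithinAt
    · intro x hx; rw [interior_Ici] at hx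
      have h1 : (0:ℝ) < x := lt_trans one_pos hx
      have h2 := hphinn x h1
      have h3 := hcoef x hx.le
      nlinarith
  have hEnn : ∀ r ∈ Ici (1:ℝ), 0 ≤ E r := by
    intro r hr
    have hr0 : (0:ℝ) < r := lt_of_lt_of_le one_pos hr
    have h1 : 0 ≤ (f r)^2/2 := by positivity
    have h2 : 0 ≤ (gFun p f' r) ^ (p/(p-1)) := Real.rpow_nonneg (hgpos r hr0).le _
    have h3 : 0 ≤ (p-1)/p := by positivity
    rw [hEdef]
    have := mul_nonneg h3 h2
    dsimp only
    linarith
  obtain ⟨Einf, hEinf0, hEL⟩ := tendsto_of_antitoneOn hEanti hEnn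
  -- (-f')^p converges to M
  have hgq : ∀ r : ℝ, 0 < r → (gFun p f' r) ^ (p/(p-1)) = (-f' r) ^ p := by
    intro r hr
    rw [gFun_eq (hf'neg r hr), ← Real.rpow_mul (by linarith [hf'neg r hr]),
      show (p-1) * (p/(p-1)) = p by field_simp]
  have hphieq : (fun r => (E r - (f r)^2/2) * (p/(p-1))) =ᶠ[atTop] fun r => (-f' r) ^ p := by
    filter_upwards [eventually_gt_atTop 0] with r hr
    rw [hEdef]
    dsimp only
    rw [hgq r hr]
    field_simp
    ring
  have hphiM : Tendsto (fun r => (-f' r) ^ p) atTop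
      (nhds ((Einf - L^2/2) * (p/(p-1)))) := by
    refine Tendsto.congr' hphieq ?_
    exact (hEL.sub ((hfL.pow 2).div_const 2)).mul_const _
  set M := (Einf - L^2/2) * (p/(p-1)) with hMdef
  have hMnn : 0 ≤ M := by
    refine ge_of_tendsto hphiM ?_
    filter_upwards [eventually_gt_atTop 0] with r hr
    exact hphinn r hr
  have hM0 : M = 0 := by
    by_contra hMne
    have hMpos : 0 < M := lt_of_le_of_ne hMnn (Ne.symm hMne)
    obtain ⟨R, hR⟩ := eventually_atTop.1
      (hphiM.eventually (eventually_ge_nhds (show M/2 < M by linarith)))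
    set R' := max R 1 with hR'def
    have hR'1 : (1:ℝ) ≤ R' := le_max_right _ _
    have hanti2 : AntitoneOn (fun r => E r + (M/2) * r) (Ici R') := by
      apply antitoneOn_of_hasDerivWithinAt_nonpos (convex_Ici R')
        (f' := fun x => -(1 + ((N : ℝ) - 1) / x) * (-f' x) ^ p + M/2 * 1)
      · intro x hx
        have hx0 : (0:ℝ) < x := lt_of_lt_of_le one_pos (le_trans hR'1 hx)
        exact ((hEd x hx0).continuousAt.add
          (continuousAt_const.mul continuousAt_id)).continuousWithinAt
      · intro x hx
        rw [interior_Ici] at hx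
        have hx0 : (0:ℝ) < x := lt_of_lt_of_le one_pos (le_trans hR'1 hx.le)
        exact ((hEd x hx0).add ((hasDerivAt_id x).const_mul (M/2))).hasDerivWithinAt
      · intro x hx
        rw [interior_Ici] at hx
        have hx1 : (1:ℝ) ≤ x := le_trans hR'1 hx.le
        have hx0 : (0:ℝ) < x := lt_of_lt_of_le one_pos hx1
        have h2 := hR x (le_trans (le_max_left R 1) hx.le)
        have h3 := hcoef x hx1
        have h4 := hphinn x hx0
        nlinarith [mul_le_mul_of_nonneg_right h3 h4]
    set C := E R' + (M/2) * R' with hCdef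
    set r0 := max R' (2*(C+1)/M) with hr0def
    have h1 : R' ≤ r0 := le_max_left _ _
    have h2 := hanti2 self_mem_Ici (show r0 ∈ Ici R' from h1) h1
    simp only at h2
    rw [← hCdef] at h2
    have h3 : 0 ≤ E r0 := hEnn r0 (le_trans hR'1 h1)
    have h4 : M/2 * (2*(C+1)/M) ≤ M/2 * r0 :=
      mul_le_mul_of_nonneg_left (le_max_right _ _) (by linarith)
    have h5 : M/2 * (2*(C+1)/M) = C + 1 := by field_simp
    clear_value E M C r0 R'
    linarith
  rw [hM0] at hphiM
  -- f' tends to 0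
  have hnegf' : Tendsto (fun r => -f' r) atTop (nhds 0) := by
    have h := hphiM.rpow_const (p := p⁻¹) (Or.inr (by positivity))
    rw [Real.zero_rpow (by positivity : p⁻¹ ≠ 0)] at h
    refine Tendsto.congr' ?_ h
    filter_upwards [eventually_gt_atTop 0] with r hr
    exact Real.rpow_rpow_inv (by linarith [hf'neg r hr]) hp0
  have hf'0 : Tendsto f' atTop (nhds 0) := by
    simpa using hnegf'.neg
  -- g and G tend to 0
  have hg0 : Tendsto (gFun p f') atTop (nhds 0) := by
    have h := hnegf'.rpow_const (p := p - 1) (Or.inr (by linarith))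
    rw [Real.zero_rpow (ne_of_gt hpm1)] at h
    refine Tendsto.congr' ?_ h
    filter_upwards [eventually_gt_atTop 0] with r hr
    exact (gFun_eq (hf'neg r hr)).symm
  have hG0 : Tendsto (fun r => |f' r| ^ (p - 2) * f' r) atTop (nhds 0) := by
    have h := hg0.neg
    rw [neg_zero] at h
    refine h.congr fun r => ?_
    rw [gFun]; ring
  -- F' tends to -L
  have habs0 : Tendsto (fun r => |f' r| ^ (p - 1)) atTop (nhds 0) := by
    have h := hG0.abs
    rw [abs_zero] at h
    exact h.congr fun r => abs_G_eq hp1' hp2 (f' r)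
  have hfrac0 : Tendsto (fun r => (((N:ℝ)-1)/r) * (|f' r| ^ (p - 2) * f' r)) atTop (nhds 0) := by
    apply squeeze_zero_norm' (a := fun r => ((N:ℝ)-1) * |(|f' r| ^ (p - 2) * f' r)|)
    · filter_upwards [eventually_ge_atTop 1] with r hr
      rw [Real.norm_eq_abs, abs_mul]
      have hb : |((N:ℝ)-1)/r| ≤ (N:ℝ)-1 := by
        rw [abs_div, abs_of_nonneg (by linarith : (0:ℝ) ≤ (N:ℝ)-1),
          abs_of_nonneg (by linarith : (0:ℝ) ≤ r)]
        exact div_le_self (by linarith) hr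
      exact mul_le_mul_of_nonneg_right hb (abs_nonneg _)
    · have h := (hG0.abs).const_mul ((N:ℝ)-1)
      rw [abs_zero, mul_zero] at h
      exact h
  have hF'lim : Tendsto F' atTop (nhds (-L)) := by
    have h := (habs0.sub hfL).sub hfrac0
    rw [zero_sub, sub_zero] at h
    refine Tendsto.congr' ?_ h
    filter_upwards [eventually_gt_atTop 0] with r hr
    have hode := hf.2.2.2.2.1 r hr
    linarith
  -- L = 0
  have hL : L = 0 := by
    by_contra hLne
    have hLpos : 0 < L := lt_of_le_of_ne hL0 (Ne.symm hLne)
    obtain ⟨R, hR⟩ := eventually_atTop.1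
      ((hF'lim.eventually (eventually_le_nhds (show -L < -L/2 by linarith))).and
        (hG0.eventually (eventually_ge_nhds (show (-1:ℝ) < 0 by norm_num))))
    set R' := max R 1 with hR'def
    have hR'1 : (1:ℝ) ≤ R' := le_max_right _ _
    have hanti3 : AntitoneOn (fun r => (|f' r| ^ (p - 2) * f' r) + (L/2) * r) (Ici R') := by
      apply antitoneOn_of_hasDerivWithinAt_nonpos (convex_Ici R')
        (f' := fun x => F' x + L/2 * 1)
      · intro x hx
        have hx0 : (0:ℝ) < x := lt_of_lt_of_le one_pos (le_trans hR'1 hx)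
        exact (((hf.2.2.1 x hx0.le).hasDerivAt (Ici_mem_nhds hx0)).continuousAt.add
          (continuousAt_const.mul continuousAt_id)).continuousWithinAt
      · intro x hx
        rw [interior_Ici] at hx
        have hx0 : (0:ℝ) < x := lt_of_lt_of_le one_pos (le_trans hR'1 hx.le)
        exact (((hf.2.2.1 x hx0.le).hasDerivAt (Ici_mem_nhds hx0)).add
          ((hasDerivAt_id x).const_mul (L/2))).hasDerivWithinAt
      · intro x hx
        rw [interior_Ici] at hx
        have h2 := (hR x (le_trans (le_max_left R 1) hx.le)).1
        linarith
    set C := (|f' R'| ^ (p - 2) * f' R') + (L/2) * R' with hCdef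
    set r0 := max R' (2*(C+2)/L) with hr0def
    have h1 : R' ≤ r0 := le_max_left _ _
    have h2 := hanti3 self_mem_Ici (show r0 ∈ Ici R' from h1) h1
    simp only at h2
    rw [← hCdef] at h2
    have h3 : -1 ≤ |f' r0| ^ (p - 2) * f' r0 :=
      (hR r0 (le_trans (le_max_left R 1) h1)).2
    have h4 : L/2 * (2*(C+2)/L) ≤ L/2 * r0 :=
      mul_le_mul_of_nonneg_left (le_max_right _ _) (by linarith)
    have h5 : L/2 * (2*(C+2)/L) = C + 2 := by field_simp
    linarith
  rw [hL] at hfL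
  exact ⟨hfL, hf'0⟩
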